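/- Let A be a finite set, let e, f⁻, f⁺ : A → [0,∞) and M⁻, M⁺ : A × A → [0,∞), and set f = f⁻ + f⁺ and M = M⁻ + M⁺. Let S⁻ = S(A, e, f⁻, M⁻). Define, for a ∈ A \ S⁻: f̂(a) = f⁺(a) + ∑_{b∈S⁻} M⁺(b,a) and ê(a) = e(a) − f⁻(a) − ∑_{b∈S⁻} M⁻(b,a), and let M̂ be the restriction of M to (A \ S⁻) × (A \ S⁻). Then ê(a) ≥ 0 for every a ∈ A \ S⁻, and if S⁺ = S(A \ S⁻, ê, f̂, M̂), then S(A, e, f, M) = S⁻ ∪ S⁺. -/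
import Mathlib


set_option maxHeartbeats 1000000

open scoped Classical

/-- The map `T(B) = {a ∈ A : f(a) + ∑_{b ∈ B} M(b,a) > e(a)}` on subsets of a finite set `A`. -/
noncomputable def Tmap {A : Type*} [Fintype A] (e f : A → ℝ) (M : A → A → ℝ)
    (B : Finset A) : Finset A :=
  Finset.univ.filter (fun a => e a < f a + ∑ b ∈ B, M b a)

/-- `S` is the smallest fixed point of `T`. -/
def IsSmallestFP {A : Type*} (T : Finset A → Finset A) (S : Finset A) : Prop :=
  T S = S ∧ ∀ S' : Finset A, T S' = S' → S ⊆ S'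

lemma mem_Tmap {A : Type*} [Fintype A] (e f : A → ℝ) (M : A → A → ℝ) (B : Finset A) (a : A) :
    a ∈ Tmap e f M B ↔ e a < f a + ∑ b ∈ B, M b a := by
  simp [Tmap]

lemma Tmap_mono {A : Type*} [Fintype A] (e f : A → ℝ) (M : A → A → ℝ)
    (hM : ∀ b a, 0 ≤ M b a) ⦃B B' : Finset A⦄ (h : B ⊆ B') :
    Tmap e f M B ⊆ Tmap e f M B' := by
  intro a ha
  rw [mem_Tmap] at ha ⊢
  have := Finset.sum_le_sum_of_subset_of_nonneg h (fun b _ _ => hM b a)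
  linarith

lemma lfp_le_prefixed {A : Type*} (T : Finset A → Finset A)
    (hmono : ∀ ⦃B B'⦄, B ⊆ B' → T B ⊆ T B') {S : Finset A}
    (hS : IsSmallestFP T S) : ∀ X, T X ⊆ X → S ⊆ X := by
  intro X
  induction X using Finset.strongInduction with
  | _ X ih =>
    intro hX
    by_cases h : T X = X
    · exact hS.2 X h
    · exact (ih (T X) (hX.ssubset_of_ne h) (hmono hX)).trans hX

theorem smallest_fixed_point_two_stage {A : Type*} [Fintype A] [DecidableEq A]
    (e fm fp : A → ℝ) (Mm Mp : A → A → ℝ)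
    (he : ∀ a, 0 ≤ e a)
    (hfm : ∀ a, 0 ≤ fm a) (hfp : ∀ a, 0 ≤ fp a)
    (hMm : ∀ b a, 0 ≤ Mm b a) (hMp : ∀ b a, 0 ≤ Mp b a)
    -- `S⁻` is the smallest fixed point for the data `(e, f⁻, M⁻)`
    (Sm : Finset A)
    (hSm : IsSmallestFP (Tmap e fm Mm) Sm)
    -- `S⁺` is the smallest fixed point on `A \ S⁻` for the data `(ê, f̂, M̂)`
    (Sp : Finset {a : A // a ∉ Sm})
    (hSp : IsSmallestFP
      (Tmap (fun a => e a.1 - fm a.1 - ∑ b ∈ Sm, Mm b a.1)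
            (fun a => fp a.1 + ∑ b ∈ Sm, Mp b a.1)
            (fun b a => Mm b.1 a.1 + Mp b.1 a.1)) Sp)
    -- `S` is the smallest fixed point for the data `(e, f⁻ + f⁺, M⁻ + M⁺)`
    (S : Finset A)
    (hS : IsSmallestFP
      (Tmap e (fun a => fm a + fp a) (fun b a => Mm b a + Mp b a)) S) :
    (∀ a : {a : A // a ∉ Sm}, 0 ≤ e a.1 - fm a.1 - ∑ b ∈ Sm, Mm b a.1) ∧
    S = Sm ∪ Sp.image Subtype.val := by
  obtain ⟨hSm1, hSm2⟩ := hSm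
  obtain ⟨hSp1, hSp2⟩ := hSp
  obtain ⟨hS1, hS2⟩ := hS
  have hhat : ∀ a : {a : A // a ∉ Sm}, 0 ≤ e a.1 - fm a.1 - ∑ b ∈ Sm, Mm b a.1 := by
    rintro ⟨a, ha⟩
    have h1 : a ∉ Tmap e fm Mm Sm := by rw [hSm1]; exact ha
    rw [mem_Tmap] at h1
    push_neg at h1
    simp only
    linarith
  refine ⟨hhat, ?_⟩
  have hdisj : Disjoint Sm (Sp.image Subtype.val) := by
    rw [Finset.disjoint_right]
    intro a ha
    obtain ⟨x, hx, rfl⟩ := Finset.mem_image.mp ha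
    exact x.2
  have hsumU : ∀ (g : A → ℝ), ∑ b ∈ Sm ∪ Sp.image Subtype.val, g b
      = ∑ b ∈ Sm, g b + ∑ x ∈ Sp, g x.1 := by
    intro g
    rw [Finset.sum_union hdisj, Finset.sum_image (fun x _ y _ h => Subtype.ext h)]
  -- the union is a fixed point of the full map
  have hTU : Tmap e (fun a => fm a + fp a) (fun b a => Mm b a + Mp b a)
      (Sm ∪ Sp.image Subtype.val) = Sm ∪ Sp.image Subtype.val := by
    ext a
    rw [mem_Tmap, hsumU]
    by_cases ha : a ∈ Sm
    · have h1 : a ∈ Tmap e fm Mm Sm := hSm1.symm ▸ ha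
      rw [mem_Tmap] at h1
      constructor
      · intro _; exact Finset.mem_union_left _ ha
      · intro _
        have h2 : ∑ b ∈ Sm, Mm b a ≤ ∑ b ∈ Sm, (Mm b a + Mp b a) :=
          Finset.sum_le_sum (fun b _ => by linarith [hMp b a])
        have h3 : (0:ℝ) ≤ ∑ x ∈ Sp, (Mm x.1 a + Mp x.1 a) :=
          Finset.sum_nonneg (fun x _ => by linarith [hMm x.1 a, hMp x.1 a])
        linarith [hfp a]
    · have key : (⟨a, ha⟩ : {a : A // a ∉ Sm}) ∈ Sp ↔
          e a - fm a - ∑ b ∈ Sm, Mm b a <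
            (fp a + ∑ b ∈ Sm, Mp b a) + ∑ x ∈ Sp, (Mm x.1 a + Mp x.1 a) := by
        conv_lhs => rw [← hSp1]
        rw [mem_Tmap]
      rw [Finset.sum_add_distrib]
      constructor
      · intro h
        refine Finset.mem_union_right _ (Finset.mem_image.mpr ⟨⟨a, ha⟩, ?_, rfl⟩)
        rw [key]
        linarith
      · intro h
        rcases Finset.mem_union.mp h with h' | h'
        · exact absurd h' ha
        · obtain ⟨x, hx, hxa⟩ := Finset.mem_image.mp h'
          obtain ⟨x, hx'⟩ := x
          subst hxa
          rw [key] at hx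
          linarith
  -- Sm ⊆ S
  have hSmS : Sm ⊆ S := by
    refine lfp_le_prefixed _ (Tmap_mono e fm Mm hMm) ⟨hSm1, hSm2⟩ S ?_
    intro a ha
    rw [mem_Tmap] at ha
    have h2 : a ∈ Tmap e (fun a => fm a + fp a) (fun b a => Mm b a + Mp b a) S := by
      rw [mem_Tmap]
      have h3 : ∑ b ∈ S, Mm b a ≤ ∑ b ∈ S, (Mm b a + Mp b a) :=
        Finset.sum_le_sum (fun b _ => by linarith [hMp b a])
      linarith [hfp a]
    exact hS1 ▸ h2
  -- Sp ⊆ subtype of S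
  have hSpS : Sp.image Subtype.val ⊆ S := by
    have hsub : Sp ⊆ S.subtype (fun a => a ∉ Sm) := by
      refine lfp_le_prefixed _
        (Tmap_mono _ _ _ (fun b a => add_nonneg (hMm b.1 a.1) (hMp b.1 a.1)))
        ⟨hSp1, hSp2⟩ _ ?_
      intro x hx
      rw [mem_Tmap] at hx
      have hfilt : ∑ b ∈ S.subtype (fun a => a ∉ Sm), (Mm b.1 x.1 + Mp b.1 x.1)
          = ∑ b ∈ S.filter (fun a => a ∉ Sm), (Mm b x.1 + Mp b x.1) :=
        by exact Finset.sum_subtype_eq_sum_filter (fun b => Mm b x.1 + Mp b x.1)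
      have hsplit : ∑ b ∈ S.filter (fun a => a ∉ Sm), (Mm b x.1 + Mp b x.1)
          + ∑ b ∈ Sm, (Mm b x.1 + Mp b x.1) = ∑ b ∈ S, (Mm b x.1 + Mp b x.1) := by
        have h4 : S.filter (fun a => ¬ a ∉ Sm) = Sm := by
          ext b
          simp only [Finset.mem_filter, not_not]
          exact ⟨fun h => h.2, fun h => ⟨hSmS h, h⟩⟩
        rw [← Finset.sum_filter_add_sum_filter_not S (fun a => a ∉ Sm)
          (fun b => Mm b x.1 + Mp b x.1), h4]
      have hmem : x.1 ∈ Tmap e (fun a => fm a + fp a) (fun b a => Mm b a + Mp b a) S := by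
        rw [mem_Tmap]
        rw [hfilt] at hx
        have h5 : ∑ b ∈ Sm, (Mm b x.1 + Mp b x.1)
            = ∑ b ∈ Sm, Mm b x.1 + ∑ b ∈ Sm, Mp b x.1 := Finset.sum_add_distrib
        linarith
      rw [Finset.mem_subtype]
      exact hS1 ▸ hmem
    intro a ha
    obtain ⟨x, hx, rfl⟩ := Finset.mem_image.mp ha
    exact Finset.mem_subtype.mp (hsub hx)
  -- conclude
  have h1 : S ⊆ Sm ∪ Sp.image Subtype.val := hS2 _ hTU
  have h2 : Sm ∪ Sp.image Subtype.val ⊆ S := Finset.union_subset hSmS hSpS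
  exact Finset.Subset.antisymm h1 h2
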